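/- If a positive-definite integral lattice Q represents both the E₈ lattice and ℤ⁸ (the standard cubic lattice of rank 8), then Q represents E₈ ⊕ ℤ⁸. -/

import Mathlib

open scoped Matrix


/-- Gram matrix of the E₈ root lattice (the E₈ Cartan matrix). -/
def E8Matrix : Matrix (Fin 8) (Fin 8) ℤ :=
  !![ 2, -1,  0,  0,  0,  0,  0,  0;
     -1,  2, -1,  0,  0,  0,  0,  0;
      0, -1,  2, -1,  0,  0,  0,  0;
      0,  0, -1,  2, -1,  0,  0,  0;
      0,  0,  0, -1,  2, -1,  0, -1;
      0,  0,  0,  0, -1,  2, -1,  0;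
      0,  0,  0,  0,  0, -1,  2,  0;
      0,  0,  0,  0, -1,  0,  0,  2]

/-- The bilinear form of the E₈ lattice on ℤ⁸. -/
noncomputable def E8Form : LinearMap.BilinForm ℤ (Fin 8 → ℤ) :=
  Matrix.toBilin' E8Matrix

/-- The (integer) inverse of the E₈ Gram matrix. -/
def E8Inv : Matrix (Fin 8) (Fin 8) ℤ :=
  !![2, 3, 4, 5, 6, 4, 2, 3;
     3, 6, 8, 10, 12, 8, 4, 6;
     4, 8, 12, 15, 18, 12, 6, 9;
     5, 10, 15, 20, 24, 16, 8, 12;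
     6, 12, 18, 24, 30, 20, 10, 15;
     4, 8, 12, 16, 20, 14, 7, 10;
     2, 4, 6, 8, 10, 7, 4, 5;
     3, 6, 9, 12, 15, 10, 5, 8]

/-- A "half" of the E₈ Gram matrix: `E8Matrix = E8A + E8Aᵀ`. -/
def E8A : Matrix (Fin 8) (Fin 8) ℤ :=
  !![1, -1, 0, 0, 0, 0, 0, 0;
     0, 1, -1, 0, 0, 0, 0, 0;
     0, 0, 1, -1, 0, 0, 0, 0;
     0, 0, 0, 1, -1, 0, 0, 0;
     0, 0, 0, 0, 1, -1, 0, -1;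
     0, 0, 0, 0, 0, 1, -1, 0;
     0, 0, 0, 0, 0, 0, 1, 0;
     0, 0, 0, 0, 0, 0, 0, 1]

lemma E8_mul_inv : E8Matrix * E8Inv = 1 := by decide

lemma E8_eq_add : E8Matrix = E8A + E8Aᵀ := by decide

lemma E8Form_apply (x y : Fin 8 → ℤ) : E8Form x y = x ⬝ᵥ E8Matrix *ᵥ y :=
  Matrix.toBilin'_apply' _ _ _

lemma E8Form_even (x : Fin 8 → ℤ) : E8Form x x = 2 * (x ⬝ᵥ E8A *ᵥ x) := by
  rw [E8Form_apply, E8_eq_add, Matrix.add_mulVec, dotProduct_add,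
    Matrix.mulVec_transpose, dotProduct_comm x (E8A.vecMul x),
    ← Matrix.dotProduct_mulVec]
  ring

lemma sum_single (x : Fin 8 → ℤ) : ∑ j, x j • Pi.single j (1 : ℤ) = x := by
  funext k
  simp [Finset.sum_apply, Pi.single_apply, Finset.sum_ite_eq]

/-- If a positive-definite integral lattice Q represents both the E₈
lattice and the standard cubic lattice ℤ⁸, then Q represents E₈ ⊕ ℤ⁸. -/
theorem represents_E8_oplus_Z8 (Q : Type*) [AddCommGroup Q] [Module ℤ Q]
    [Module.Free ℤ Q] [Module.Finite ℤ Q]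
    (B : LinearMap.BilinForm ℤ Q)
    (hsymm : ∀ x y : Q, B x y = B y x)
    (hpos : ∀ x : Q, x ≠ 0 → 0 < B x x)
    (hE8 : ∃ f : (Fin 8 → ℤ) →ₗ[ℤ] Q, Function.Injective f ∧
      ∀ x y : Fin 8 → ℤ, B (f x) (f y) = E8Form x y)
    (hZ8 : ∃ g : (Fin 8 → ℤ) →ₗ[ℤ] Q, Function.Injective g ∧
      ∀ a b : Fin 8 → ℤ, B (g a) (g b) = dotProduct a b) :
    ∃ φ : ((Fin 8 → ℤ) × (Fin 8 → ℤ)) →ₗ[ℤ] Q, Function.Injective φ ∧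
      ∀ p q : (Fin 8 → ℤ) × (Fin 8 → ℤ),
        B (φ p) (φ q) = E8Form p.1 q.1 + dotProduct p.2 q.2 := by
  obtain ⟨f, hfinj, hfB⟩ := hE8
  obtain ⟨g, hginj, hgB⟩ := hZ8
  -- the minimum of the E₈ form is 2
  have hmin : ∀ x : Fin 8 → ℤ, x ≠ 0 → 2 ≤ E8Form x x := by
    intro x hx
    have hfx : f x ≠ 0 := by
      intro h
      exact hx (hfinj (by simpa using h))
    have h1 : 0 < E8Form x x := by rw [← hfB]; exact hpos _ hfx
    have h2 := E8Form_even x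
    omega
  -- orthogonality of the images of basis vectors of ℤ⁸ with the E₈ copy
  have horth0 : ∀ (i : Fin 8) (x : Fin 8 → ℤ),
      B (g (Pi.single i 1)) (f x) = 0 := by
    intro i
    set v := g (Pi.single i 1) with hv
    set c : Fin 8 → ℤ := fun j => B v (f (Pi.single j 1)) with hc
    have hBvf : ∀ x : Fin 8 → ℤ, B v (f x) = c ⬝ᵥ x := by
      intro x
      have h1 : c ⬝ᵥ x = ∑ j, c j * x j := rfl
      conv_lhs => rw [← sum_single x]
      rw [map_sum, map_sum, h1]
      refine Finset.sum_congr rfl fun j _ => ?_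
      rw [LinearMap.map_smul, LinearMap.map_smul, smul_eq_mul]
      simp only [hc]
      exact mul_comm _ _
    set y : Fin 8 → ℤ := E8Inv *ᵥ c with hy
    have hMy : E8Matrix *ᵥ y = c := by
      rw [hy, Matrix.mulVec_mulVec, E8_mul_inv, Matrix.one_mulVec]
    have hEyy : E8Form y y = y ⬝ᵥ c := by rw [E8Form_apply, hMy]
    have hBvv : B v v = 1 := by
      rw [hv, hgB, dotProduct_single, Pi.single_eq_same, mul_one]
    have hBvw : B v (f y) = y ⬝ᵥ c := by
      rw [hBvf, dotProduct_comm]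
    have hBww : B (f y) (f y) = y ⬝ᵥ c := by rw [hfB, hEyy]
    have hexp : B (v - f y) (v - f y) = 1 - y ⬝ᵥ c := by
      simp only [map_sub, LinearMap.sub_apply]
      rw [hsymm (f y) v, hBvv, hBvw, hBww]
      ring
    have hge : 0 ≤ B (v - f y) (v - f y) := by
      rcases eq_or_ne (v - f y) 0 with h | h
      · rw [h]; simp
      · exact le_of_lt (hpos _ h)
    have hyc : y ⬝ᵥ c ≤ 1 := by omega
    have hy0 : y = 0 := by
      by_contra h
      have := hmin y h
      rw [hEyy] at this
      omega
    have hc0 : c = 0 := by rw [← hMy, hy0, Matrix.mulVec_zero]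
    intro x
    rw [hBvf, hc0, zero_dotProduct]
  -- orthogonality in general
  have horth : ∀ (a x : Fin 8 → ℤ), B (g a) (f x) = 0 := by
    intro a x
    conv_lhs => rw [← sum_single a]
    rw [map_sum, map_sum, LinearMap.sum_apply]
    apply Finset.sum_eq_zero
    intro j _
    rw [LinearMap.map_smul, LinearMap.map_smul, LinearMap.smul_apply, horth0,
      smul_zero]
  refine ⟨f.coprod g, ?_, ?_⟩
  · rw [injective_iff_map_eq_zero]
    intro p hp
    have hform : B (f.coprod g p) (f.coprod g p)
        = E8Form p.1 p.1 + p.2 ⬝ᵥ p.2 := by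
      simp only [LinearMap.coprod_apply, map_add, LinearMap.add_apply,
        hfB, hgB, horth, hsymm (f p.1) (g p.2)]
      ring
    rw [hp] at hform
    simp only [map_zero, LinearMap.zero_apply] at hform
    have h2 : 0 ≤ p.2 ⬝ᵥ p.2 :=
      Finset.sum_nonneg fun i _ => mul_self_nonneg _
    have hp1 : p.1 = 0 := by
      by_contra h
      have := hmin _ h
      omega
    have hp2 : p.2 = 0 := by
      rw [← dotProduct_self_eq_zero (v := p.2)]
      rw [hp1] at hform
      simp only [map_zero, LinearMap.zero_apply] at hform
      omega
    exact Prod.ext hp1 hp2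
  · intro p q
    simp only [LinearMap.coprod_apply, map_add, LinearMap.add_apply,
      hfB, hgB, horth, hsymm (f p.1) (g q.2)]
    ring
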